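/- Let a×A, b×B, c×C ⊆ l×k be rectangles with a+b ≤ l or A+B ≤ k (so σ_{a×A}·σ_{b×B} ≠ 0). Then κ(a×A, b×B) is disjoint from rotate(c×C) in the l×k rectangle if and only if conditions (ii)–(v) hold: a+c ≤ l or A+C ≤ k; b+c ≤ l or B+C ≤ k; a+b+c ≤ l or A+B+C ≤ 2k; a+b+c ≤ 2l or A+B+C ≤ k. Here κ(a×A,b×B) = (a×A) ∪ (b×B) ∪ ((a+b)×(A+B−k)) ∪ ((a+b−l)×(A+B)), with rectangles of nonpositive dimension or not fitting in l×k omitted. -/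

import Mathlib

open YoungDiagram

namespace QCGrass

/-- The rectangular Young diagram with `m` rows of length `M`. -/
def rect (m M : ℕ) : YoungDiagram :=
  ⟨Finset.range m ×ˢ Finset.range M, by
    intro a b hba ha
    simp only [Finset.coe_product, Set.mem_prod, Finset.mem_coe, Finset.mem_range] at *
    exact ⟨lt_of_le_of_lt hba.1 ha.1, lt_of_le_of_lt hba.2 ha.2⟩⟩

/-- The cells of the skew shape `nu / lam`. -/
def skewCells (lam nu : YoungDiagram) : Finset (ℕ × ℕ) := nu.cells \ lam.cells

/-- `T` is a Littlewood–Richardson skew tableau of shape `nu / lam` and content `mu`: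
entries (valued in `{1, 2, …}`, with `0` meaning "no entry") are supported exactly on the
skew shape `nu / lam`, weakly increase along rows, strictly increase down columns, the number
of entries equal to `r + 1` is the `r`-th row length of `mu`, and the reverse reading word
(rows read right to left, top to bottom) is a lattice word. -/
def IsLRTableau (lam mu nu : YoungDiagram) (T : ℕ × ℕ → ℕ) : Prop :=
  lam ≤ nu ∧
  (∀ p : ℕ × ℕ, 1 ≤ T p ↔ p ∈ skewCells lam nu) ∧
  (∀ i j j' : ℕ, j ≤ j' → (i, j) ∈ skewCells lam nu → (i, j') ∈ skewCells lam nu →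
      T (i, j) ≤ T (i, j')) ∧
  (∀ i i' j : ℕ, i < i' → (i, j) ∈ skewCells lam nu → (i', j) ∈ skewCells lam nu →
      T (i, j) < T (i', j)) ∧
  (∀ r : ℕ, ((skewCells lam nu).filter (fun p => T p = r + 1)).card = mu.rowLen r) ∧
  (∀ i j r : ℕ,
      ((skewCells lam nu).filter
        (fun p => T p = r + 2 ∧ (p.1 < i ∨ (p.1 = i ∧ j ≤ p.2)))).card ≤
      ((skewCells lam nu).filter
        (fun p => T p = r + 1 ∧ (p.1 < i ∨ (p.1 = i ∧ j ≤ p.2)))).card)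

/-- The Littlewood–Richardson coefficient `c^nu_{lam, mu}`, defined as the number of
Littlewood–Richardson skew tableaux of shape `nu / lam` and content `mu`. -/
noncomputable def lrCoeff (lam mu nu : YoungDiagram) : ℕ :=
  Nat.card {T : ℕ × ℕ → ℕ // IsLRTableau lam mu nu T}

/-- The set of boxes (in `0`-indexed matrix coordinates) of `mu` rotated 180 degrees and
placed in the lower-right corner of the `l × k` rectangle. -/
def rotSet (l k : ℕ) (mu : YoungDiagram) : Set (ℕ × ℕ) :=
  {p | p.1 < l ∧ p.2 < k ∧ k - mu.rowLen (l - 1 - p.1) ≤ p.2}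

/-- Two boxes are adjacent when they share an edge. -/
def Adjacent (p q : ℕ × ℕ) : Prop :=
  (p.1 = q.1 ∧ (p.2 = q.2 + 1 ∨ q.2 = p.2 + 1)) ∨
  (p.2 = q.2 ∧ (p.1 = q.1 + 1 ∨ q.1 = p.1 + 1))

/-- `mu` is obtained from `lam` by removing a legal `n`-rim hook: `mu ⊆ lam` (so the removal
leaves a Young diagram), the removed set has `n` boxes, is edge-connected, and contains
no `2 × 2` square. -/
def IsRimHookRemoval (n : ℕ) (lam mu : YoungDiagram) : Prop :=
  mu ≤ lam ∧ (skewCells mu lam).card = n ∧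
  (∀ p ∈ skewCells mu lam, ∀ q ∈ skewCells mu lam,
    Relation.ReflTransGen
      (fun a b => a ∈ skewCells mu lam ∧ b ∈ skewCells mu lam ∧ Adjacent a b) p q) ∧
  ¬ ∃ i j : ℕ, (i, j) ∈ skewCells mu lam ∧ (i + 1, j) ∈ skewCells mu lam ∧
      (i, j + 1) ∈ skewCells mu lam ∧ (i + 1, j + 1) ∈ skewCells mu lam

/-- One legal `n`-rim hook removal step. -/
def RimStep (n : ℕ) (lam mu : YoungDiagram) : Prop := IsRimHookRemoval n lam mu

/-- A diagram is an `n`-core when no legal `n`-rim hook can be removed from it. -/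
def IsCore (n : ℕ) (t : YoungDiagram) : Prop := ¬ ∃ s, RimStep n t s

/-- `ReachesIn n m a b` : `b` is obtained from `a` by `m` successive legal `n`-rim hook
removals. -/
def ReachesIn (n : ℕ) : ℕ → YoungDiagram → YoungDiagram → Prop
  | 0 => fun a b => a = b
  | m + 1 => fun a b => ∃ c, RimStep n a c ∧ ReachesIn n m c b

/-- The width (number of occupied columns) of the strip removed in passing
from `lam` to `mu`. -/
def hookWidth (lam mu : YoungDiagram) : ℕ := ((skewCells mu lam).image Prod.snd).card

/-- The height (number of occupied rows) of the strip removed in passing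
from `lam` to `mu`. -/
def hookHeight (lam mu : YoungDiagram) : ℕ := ((skewCells mu lam).image Prod.fst).card

/-- `ReachesInSign n k m s a b` : `b` is obtained from `a` by `m` successive legal `n`-rim
hook removals, and `s = ∏ (-1)^(k - width(R_i))` over the removed hooks `R_i`. -/
def ReachesInSign (n k : ℕ) : ℕ → ℤ → YoungDiagram → YoungDiagram → Prop
  | 0 => fun s a b => a = b ∧ s = 1
  | m + 1 => fun s a b => ∃ c s', RimStep n a c ∧ ReachesInSign n k m s' c b ∧
      s = (-1) ^ (k - hookWidth a c) * s'

/-- `diagLen lam` is the number of diagonal boxes of `lam`, i.e. the side length of the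
largest square contained in `lam`. -/
def diagLen (lam : YoungDiagram) : ℕ := (lam.cells.filter fun p => p.1 = p.2).card

/-- A `d × d` square of boxes fits inside `lam ∩ rotate(mu)` within the `l × k` rectangle. -/
def SquareFits (l k : ℕ) (lam mu : YoungDiagram) (d : ℕ) : Prop :=
  ∃ i j : ℕ, ∀ i' j' : ℕ, i ≤ i' → i' < i + d → j ≤ j' → j' < j + d →
    (i', j') ∈ lam.cells ∧ (i', j') ∈ rotSet l k mu

/-- The triple product `σ_lam · σ_mu · σ_nu` is nonzero in `H^*(Gr(l, l+k))`: some `rho ⊆ l × k`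
has `c^rho_{lam,mu} ≠ 0` and `rho` is disjoint from `rotate(nu)`. -/
def TripleNonzero (l k : ℕ) (lam mu nu : YoungDiagram) : Prop :=
  ∃ rho, rho ≤ rect l k ∧ lrCoeff lam mu rho ≠ 0 ∧
    ∀ i, i < l → rho.rowLen i + nu.rowLen (l - 1 - i) ≤ k



theorem mem_rect {m M : ℕ} {p : ℕ × ℕ} : p ∈ rect m M ↔ p.1 < m ∧ p.2 < M := by
  cases p with
  | mk i j =>
    simp [rect, ← YoungDiagram.mem_cells, Finset.mem_product, Finset.mem_range]

theorem rowLen_rect (m M i : ℕ) : (rect m M).rowLen i = if i < m then M else 0 := by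
  have key : ∀ j, j < (rect m M).rowLen i ↔ (i < m ∧ j < M) := fun j => by
    rw [← YoungDiagram.mem_iff_lt_rowLen]; exact mem_rect
  by_cases h : i < m
  · simp only [h, if_true]
    refine eq_of_forall_lt_iff fun j => ?_
    rw [key]; simp [h]
  · simp only [h, if_false]
    by_contra hne
    have := (key 0).mp (Nat.pos_of_ne_zero hne)
    exact h this.1

theorem mem_rotSet_rect {l k c C : ℕ} (hc : c ≤ l) (hC : C ≤ k) (p : ℕ × ℕ) :
    p ∈ rotSet l k (rect c C) ↔ l - c ≤ p.1 ∧ p.1 < l ∧ k - C ≤ p.2 ∧ p.2 < k := by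
  simp only [rotSet, Set.mem_setOf_eq, rowLen_rect]
  split_ifs with h <;> omega

/-- For rectangles `a × A`, `b × B`, `c × C` inside `l × k` with `a + b ≤ l`
or `A + B ≤ k`, the diagram `κ(a×A, b×B) = (a×A) ∪ (b×B) ∪ ((a+b)×(A+B-k)) ∪
((a+b-l)×(A+B))` (rectangles of nonpositive dimensions or not fitting in `l × k` omitted)
is disjoint from `rotate(c × C)` if and only if conditions (ii)-(v) hold. -/
theorem kappa_disjoint_from_rotate_iff (l k a A b B c C : ℕ)
    (ha : a ≤ l) (hA : A ≤ k) (hb : b ≤ l) (hB : B ≤ k) (hc : c ≤ l) (hC : C ≤ k)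
    (hnz : a + b ≤ l ∨ A + B ≤ k) (U : YoungDiagram)
    (hU : U = rect a A ⊔ rect b B ⊔
      (if a + b ≤ l then rect (a + b) (A + B - k) else ⊥) ⊔
      (if A + B ≤ k then rect (a + b - l) (A + B) else ⊥)) :
    (∀ p : ℕ × ℕ, p ∈ U.cells → p ∉ rotSet l k (rect c C)) ↔
    ((a + c ≤ l ∨ A + C ≤ k) ∧ (b + c ≤ l ∨ B + C ≤ k) ∧
      (a + b + c ≤ l ∨ A + B + C ≤ 2 * k) ∧ (a + b + c ≤ 2 * l ∨ A + B + C ≤ k)) := by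
  have memU : ∀ p : ℕ × ℕ, p ∈ U.cells ↔
      ((p.1 < a ∧ p.2 < A) ∨ (p.1 < b ∧ p.2 < B) ∨
        (a + b ≤ l ∧ p.1 < a + b ∧ p.2 < A + B - k) ∨
        (A + B ≤ k ∧ p.1 < a + b - l ∧ p.2 < A + B)) := by
    intro p
    subst hU
    by_cases h1 : a + b ≤ l <;> by_cases h2 : A + B ≤ k <;>
      simp [h1, h2, YoungDiagram.mem_cells, YoungDiagram.mem_sup, mem_rect,
        YoungDiagram.notMem_bot]
  constructor
  · intro hdis
    have key : ((l - c : ℕ), (k - C : ℕ)) ∉ U.cells := by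
      intro hmem
      exact hdis _ hmem ((mem_rotSet_rect hc hC _).mpr (by
        have := (memU _).mp hmem
        simp only at this ⊢
        omega))
    rw [memU] at key
    simp only at key
    refine ⟨?_, ?_, ?_, ?_⟩ <;> by_contra h <;> push_neg at h <;> exact key (by omega)
  · intro hcond p hpU hpR
    rw [memU] at hpU
    rw [mem_rotSet_rect hc hC] at hpR
    obtain ⟨h2, h3, h4, h5⟩ := hcond
    omega


end QCGrass
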